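/- Two DAGs G_1 and G_2 on the same vertex set V are Markov equivalent (they have exactly the same d-separations) if and only if sk(G_1) = sk(G_2) and G_1 and G_2 have exactly the same collider v-configurations. -/

import Mathlib

open MeasureTheory ProbabilityTheory

/-- A directed acyclic graph on vertex set `V`: a directed edge relation with no
directed cycles (a directed path from a node to itself). -/
structure DAG (V : Type*) where
  Edge : V → V → Prop
  acyclic : ∀ i, ¬ Relation.TransGen Edge i i

namespace DAG

variable {V : Type*}

/-- `i` and `j` are adjacent if there is a directed edge between them in either direction. -/
def Adj (G : DAG V) (i j : V) : Prop := G.Edge i j ∨ G.Edge j i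

/-- `an_G(C)`: the set of nodes not in `C` with a directed path to some node of `C`. -/
def ancestors (G : DAG V) (C : Set V) : Set V :=
  {i | i ∉ C ∧ ∃ j ∈ C, Relation.TransGen G.Edge i j}

/-- A path between `a` and `b` in (the skeleton of) a DAG `G`: a sequence of at least two
distinct vertices starting at `a`, ending at `b`, with consecutive vertices adjacent. -/
structure Path (G : DAG V) (a b : V) where
  n : ℕ
  npos : 0 < n
  f : Fin (n + 1) → V
  first : f 0 = a
  last : f (Fin.last n) = b
  adj : ∀ i : Fin n, G.Adj (f i.castSucc) (f i.succ)
  inj : Function.Injective f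

/-- The intermediate node at position `t` of the path is a collider on the path:
both incident edges of the path point into it. -/
def Path.ColliderAt {G : DAG V} {a b : V} (π : Path G a b) (t : ℕ)
    (h1 : 0 < t) (h2 : t < π.n) : Prop :=
  G.Edge (π.f ⟨t - 1, by omega⟩) (π.f ⟨t, by omega⟩) ∧
  G.Edge (π.f ⟨t + 1, by omega⟩) (π.f ⟨t, by omega⟩)

/-- A path is blocked by `C` if some intermediate non-collider on the path lies in `C`,
or some collider `m` on the path satisfies `m ∉ C ∪ an_G(C)`. -/
def Path.Blocked {G : DAG V} {a b : V} (π : Path G a b) (C : Set V) : Prop :=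
  ∃ (t : ℕ) (h1 : 0 < t) (h2 : t < π.n),
    (¬ π.ColliderAt t h1 h2 ∧ π.f ⟨t, by omega⟩ ∈ C) ∨
    (π.ColliderAt t h1 h2 ∧ π.f ⟨t, by omega⟩ ∉ C ∪ G.ancestors C)

/-- d-separation: every path between a node of `A` and a node of `B` is blocked by `C`. -/
def dSep (G : DAG V) (A B C : Set V) : Prop :=
  ∀ a ∈ A, ∀ b ∈ B, ∀ π : Path G a b, π.Blocked C

/-- Two DAGs are Markov equivalent if they have exactly the same d-separations. -/
def MarkovEquiv (G₁ G₂ : DAG V) : Prop :=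
  ∀ A B C : Set V, Disjoint A B → Disjoint A C → Disjoint B C →
    (G₁.dSep A B C ↔ G₂.dSep A B C)

/-- A v-configuration `i ∼ k ∼ j` in the DAG: `i, k, j` distinct, `i` and `j` each
adjacent to `k`, but `i` and `j` not adjacent. -/
def VConfig (G : DAG V) (i k j : V) : Prop :=
  i ≠ j ∧ i ≠ k ∧ j ≠ k ∧ G.Adj i k ∧ G.Adj j k ∧ ¬ G.Adj i j

/-- A collider v-configuration `i → k ← j`. -/
def IsCollider (G : DAG V) (i k j : V) : Prop :=
  G.VConfig i k j ∧ G.Edge i k ∧ G.Edge j k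

/-- A non-collider v-configuration. -/
def IsNonCollider (G : DAG V) (i k j : V) : Prop :=
  G.VConfig i k j ∧ ¬ (G.Edge i k ∧ G.Edge j k)

end DAG

/-- A v-configuration `i ∼ k ∼ j` in an undirected graph given by an adjacency relation. -/
def VConfigRel {V : Type*} (A : V → V → Prop) (i k j : V) : Prop :=
  i ≠ j ∧ i ≠ k ∧ j ≠ k ∧ A i k ∧ A j k ∧ ¬ A i j

section Prob

variable {V : Type*} {Ω : Type*} [MeasurableSpace Ω] [StandardBorelSpace Ω] [Nonempty Ω]
  {E : V → Type*} [∀ i, MeasurableSpace (E i)]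

/-- `A ⫫ B | C`: the families `(X i)_{i ∈ A}` and `(X j)_{j ∈ B}` are conditionally
independent given the σ-algebra generated by `(X k)_{k ∈ C}`, under `μ`. -/
def CI (μ : Measure Ω) [IsFiniteMeasure μ] (X : ∀ i, Ω → E i)
    (hX : ∀ i, Measurable (X i)) (A B C : Set V) : Prop :=
  CondIndepFun (MeasurableSpace.comap (fun ω => fun k : C => X k.1 ω) inferInstance)
    ((measurable_pi_iff.mpr fun k : C => hX k.1).comap_le)
    (fun ω => fun i : A => X i.1 ω) (fun ω => fun j : B => X j.1 ω) μ

variable (μ : Measure Ω) [IsFiniteMeasure μ] (X : ∀ i, Ω → E i) (hX : ∀ i, Measurable (X i))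

/-- The skeleton of `P`: distinct `i, j` are adjacent iff no `C ⊆ V \ {i,j}` renders
`{i} ⫫ {j} | C`. -/
def SkP (i j : V) : Prop :=
  i ≠ j ∧ ¬ ∃ C : Set V, C ⊆ ({i, j} : Set V)ᶜ ∧ CI μ X hX {i} {j} C

/-- `P` is Markovian to `G`: every d-separation implies the corresponding
conditional independence. -/
def MarkovTo (G : DAG V) : Prop :=
  ∀ A B C : Set V, Disjoint A B → Disjoint A C → Disjoint B C →
    G.dSep A B C → CI μ X hX A B C

/-- Adjacency faithfulness: adjacent nodes of `G` are separated by no conditioning set. -/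
def AdjFaithful (G : DAG V) : Prop :=
  ∀ i j : V, G.Adj i j → ¬ ∃ C : Set V, C ⊆ ({i, j} : Set V)ᶜ ∧ CI μ X hX {i} {j} C

/-- `sk(P) = sk(G)`. -/
def SkelEq (G : DAG V) : Prop :=
  ∀ i j : V, G.Adj i j ↔ SkP μ X hX i j

/-- V-ordered upward stability wrt `G`. -/
def VOUS (G : DAG V) : Prop :=
  ∀ i k j : V, G.IsNonCollider i k j → ∀ C : Set V, C ⊆ ({i, j, k} : Set V)ᶜ →
    CI μ X hX {i} {j} C → CI μ X hX {i} {j} (C ∪ {k})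

/-- Collider-stability wrt `G`. -/
def ColliderStable (G : DAG V) : Prop :=
  ∀ i k j : V, G.IsCollider i k j →
    ∃ C : Set V, C ⊆ ({i, j, k} : Set V)ᶜ ∧ CI μ X hX {i} {j} C

/-- V-stability of `P`. -/
def VStable : Prop :=
  ∀ i k j : V, VConfigRel (SkP μ X hX) i k j → ∀ C : Set V, C ⊆ ({i, j, k} : Set V)ᶜ →
    ¬ (CI μ X hX {i} {j} C ∧ CI μ X hX {i} {j} (C ∪ {k}))

/-- The orientation rule assigns the v-configuration `i ∼ k ∼ j` of `sk(P)` to be a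
collider. -/
def AssignedCollider (i k j : V) : Prop :=
  VConfigRel (SkP μ X hX) i k j ∧
  ∃ C : Set V, C ⊆ ({i, j, k} : Set V)ᶜ ∧
    CI μ X hX {i} {j} C ∧ ¬ CI μ X hX {i} {j} (C ∪ {k})

/-- The orientation rule assigns the v-configuration `i ∼ k ∼ j` of `sk(P)` to be a
non-collider. -/
def AssignedNonCollider (i k j : V) : Prop :=
  VConfigRel (SkP μ X hX) i k j ∧
  ∀ C : Set V, C ⊆ ({i, j} : Set V)ᶜ → CI μ X hX {i} {j} C → k ∈ C

/-- A DAG `G` satisfies the V-OUS and collider-stable orientation rule wrt `P`. -/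
def SatisfiesRule (G : DAG V) : Prop :=
  SkelEq μ X hX G ∧
  (∀ i k j : V, AssignedCollider μ X hX i k j → G.IsCollider i k j) ∧
  (∀ i k j : V, AssignedNonCollider μ X hX i k j → G.IsNonCollider i k j)

/-- Modified V-stability: any two DAGs `G` with `sk(G) = sk(P)` to which `P` is V-OUS and
collider-stable are Markov equivalent. -/
def ModifiedVStable : Prop :=
  ∀ G₁ G₂ : DAG V,
    SkelEq μ X hX G₁ → VOUS μ X hX G₁ → ColliderStable μ X hX G₁ →
    SkelEq μ X hX G₂ → VOUS μ X hX G₂ → ColliderStable μ X hX G₂ →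
    DAG.MarkovEquiv G₁ G₂

/-- Ordered upward stability wrt `G`. -/
def OUS (G : DAG V) : Prop :=
  ∀ i j k : V, i ≠ j → i ≠ k → j ≠ k → k ∈ G.ancestors {i, j} →
    ∀ C : Set V, C ⊆ ({i, j, k} : Set V)ᶜ →
      CI μ X hX {i} {j} C → CI μ X hX {i} {j} (C ∪ {k})

/-- Ordered downward stability wrt `G`. -/
def ODS (G : DAG V) : Prop :=
  ∀ i j k : V, i ≠ j → i ≠ k → j ≠ k →
    ∀ C : Set V, C ⊆ ({i, j, k} : Set V)ᶜ → k ∉ G.ancestors ({i, j} ∪ C) →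
      CI μ X hX {i} {j} (C ∪ {k}) → CI μ X hX {i} {j} C

end Prob


/-! ### Auxiliary development -/

open Relation Classical

section Aux

variable {V : Type*}

namespace DAG

lemma not_edge_self (G : DAG V) (i : V) : ¬ G.Edge i i :=
  fun h => G.acyclic i (TransGen.single h)

lemma not_edge_both (G : DAG V) {i j : V} (h : G.Edge i j) : ¬ G.Edge j i :=
  fun h' => G.acyclic i ((TransGen.single h).tail h')

lemma edge_ne (G : DAG V) {i j : V} (h : G.Edge i j) : i ≠ j := by
  rintro rfl; exact G.not_edge_self i h

lemma adj_ne (G : DAG V) {i j : V} (h : G.Adj i j) : i ≠ j := by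
  rcases h with h | h
  · exact G.edge_ne h
  · exact (G.edge_ne h).symm

lemma adj_symm (G : DAG V) {i j : V} (h : G.Adj i j) : G.Adj j i := h.symm

/-- An ℕ-indexed walk (not necessarily injective) whose interior nodes satisfy the
"weak activeness" conditions: colliders lie in `C ∪ an(C)`, non-colliders avoid `C`. -/
structure NWalk (G : DAG V) (C : Set V) (a b : V) where
  n : ℕ
  npos : 0 < n
  f : ℕ → V
  first : f 0 = a
  last : f n = b
  adj : ∀ t, t < n → G.Adj (f t) (f (t+1))
  ok : ∀ t, 0 < t → t < n →
    ((G.Edge (f (t-1)) (f t) ∧ G.Edge (f (t+1)) (f t)) → f t ∈ C ∪ G.ancestors C) ∧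
    (¬(G.Edge (f (t-1)) (f t) ∧ G.Edge (f (t+1)) (f t)) → f t ∉ C)

/-- Reachability states for "strong" active walks: `Reach G C a v f` means there is an
active walk from `a` arriving at `v`, where `f = some true` means the last edge points
into `v`, `f = some false` means it points out of `v`, and `f = none` means the walk is
trivial (`v = a`).  All interior colliders lie in `C` and non-colliders avoid `C`. -/
inductive Reach (G : DAG V) (C : Set V) (a : V) : V → Option Bool → Prop
  | start : Reach G C a a none
  | out {v w : V} {f : Option Bool} : Reach G C a v f → (f ≠ none → v ∉ C) →
      G.Edge v w → Reach G C a w (some true)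
  | into {v w : V} {f : Option Bool} : Reach G C a v f → (f = some true → v ∈ C) →
      (f = some false → v ∉ C) → G.Edge w v → Reach G C a w (some false)

lemma reach_none {G : DAG V} {C : Set V} {a v : V} (h : Reach G C a v none) : v = a := by
  cases h; rfl

/-- Bounce: a walk arriving into `v ∉ C` which has a descendant in `C` can be extended to
a walk arriving at `v` with outward flag (descend to `C` and come back). -/
lemma reach_bounce {G : DAG V} {C : Set V} {a v c : V} (ht : TransGen G.Edge v c)
    (hc : c ∈ C) :
    Reach G C a v (some true) → v ∉ C → Reach G C a v (some false) := by
  induction ht using TransGen.head_induction_on with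
  | single h =>
    intro hr hv
    exact Reach.into ((Reach.out hr (fun _ => hv) h)) (fun _ => hc) (by simp) h
  | head e _ ih =>
    rename_i v' m _
    intro hr hv
    by_cases hm : m ∈ C
    · exact Reach.into ((Reach.out hr (fun _ => hv) e)) (fun _ => hm) (by simp) e
    · have h1 : Reach G C a m (some true) := Reach.out hr (fun _ => hv) e
      have h2 : Reach G C a m (some false) := ih h1 hm
      exact Reach.into h2 (by simp) (fun _ => hm) e

/-- Chain lemma: consecutive forward edges give a directed path. -/
lemma transGen_of_chain {G : DAG V} (f : ℕ → V) {s q : ℕ} (hsq : s < q)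
    (h : ∀ r, s ≤ r → r < q → G.Edge (f r) (f (r+1))) :
    TransGen G.Edge (f s) (f q) := by
  induction q with
  | zero => omega
  | succ q ih =>
    rcases Nat.lt_succ_iff_lt_or_eq.mp hsq with h' | h'
    · exact (ih h' (fun r h1 h2 => h r h1 (by omega))).tail (h q (by omega) (by omega))
    · subst h'; exact TransGen.single (h s le_rfl (by omega))


lemma NWalk.mem_union_cases {G : DAG V} {C : Set V} {v : V}
    (h : v ∈ C ∪ G.ancestors C) : v ∈ C ∨ (v ∉ C ∧ ∃ c ∈ C, TransGen G.Edge v c) := by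
  rcases h with h | h
  · exact Or.inl h
  · exact Or.inr ⟨h.1, h.2⟩

lemma NWalk.toReach {G : DAG V} {C : Set V} {a b : V} (W : NWalk G C a b) :
    ∃ d, Reach G C a b (some d) := by
  have key : ∀ t, 1 ≤ t → t ≤ W.n →
      (G.Edge (W.f (t-1)) (W.f t) → Reach G C a (W.f t) (some true)) ∧
      (¬ G.Edge (W.f (t-1)) (W.f t) → Reach G C a (W.f t) (some false)) := by
    intro t
    induction t with
    | zero => omega
    | succ t ih =>
      intro _ hle
      rcases Nat.eq_zero_or_pos t with rfl | htpos
      · -- first step from a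
        constructor
        · intro he
          simp only [Nat.add_sub_cancel] at he
          rw [W.first] at he
          exact Reach.out Reach.start (by simp) he
        · intro he
          simp only [Nat.add_sub_cancel] at he
          rw [W.first] at he
          have hadj := W.adj 0 (by omega)
          rw [W.first] at hadj
          rcases hadj with h | h
          · exact absurd h he
          · exact Reach.into Reach.start (by simp) (by simp) h
      · have ih' := ih htpos (by omega)
        have hint := W.ok t htpos (by omega)
        have hadj := W.adj t (by omega)
        simp only [Nat.add_sub_cancel]
        constructor
        · intro he
          have hnc : ¬(G.Edge (W.f (t-1)) (W.f t) ∧ G.Edge (W.f (t+1)) (W.f t)) := by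
            rintro ⟨_, h2⟩; exact G.not_edge_both he h2
          have hC : W.f t ∉ C := hint.2 hnc
          by_cases hprev : G.Edge (W.f (t-1)) (W.f t)
          · exact Reach.out (ih'.1 hprev) (fun _ => hC) he
          · exact Reach.out (ih'.2 hprev) (fun _ => hC) he
        · intro he
          have he' : G.Edge (W.f (t+1)) (W.f t) := by
            rcases hadj with h | h
            · exact absurd h he
            · exact h
          by_cases hprev : G.Edge (W.f (t-1)) (W.f t)
          · have hcol : W.f t ∈ C ∪ G.ancestors C := hint.1 ⟨hprev, he'⟩
            rcases NWalk.mem_union_cases hcol with hC | ⟨hC, c, hcC, htg⟩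
            · exact Reach.into (ih'.1 hprev) (fun _ => hC) (by simp) he'
            · have hb := reach_bounce htg hcC (ih'.1 hprev) hC
              exact Reach.into hb (by simp) (fun _ => hC) he'
          · have hC : W.f t ∉ C := hint.2 (by rintro ⟨h1, _⟩; exact hprev h1)
            exact Reach.into (ih'.2 hprev) (by simp) (fun _ => hC) he'
  have hfin := key W.n (by have := W.npos; omega) le_rfl
  rw [W.last] at hfin
  by_cases he : G.Edge (W.f (W.n - 1)) b
  · exact ⟨true, hfin.1 he⟩
  · exact ⟨false, hfin.2 he⟩

/-- A single-edge walk. -/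
def NWalk.single {G : DAG V} {C : Set V} {a w : V} (h : G.Adj a w) : NWalk G C a w where
  n := 1
  npos := one_pos
  f := fun t => if t = 0 then a else w
  first := by simp
  last := by simp
  adj := by
    intro t ht
    have : t = 0 := by omega
    subst this
    simpa using h
  ok := by intro t h1 h2; omega

@[simp] lemma NWalk.single_f_zero {G : DAG V} {C : Set V} {a w : V} (h : G.Adj a w) :
    (NWalk.single (C := C) h).f 0 = a := by simp [NWalk.single]

lemma NWalk.single_n {G : DAG V} {C : Set V} {a w : V} (h : G.Adj a w) :
    (NWalk.single (C := C) h).n = 1 := rfl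

/-- Extend a walk by one more vertex. -/
lemma NWalk.snoc {G : DAG V} {C : Set V} {a v : V} (W : NWalk G C a v) (w : V)
    (hadj : G.Adj v w)
    (hok : ((G.Edge (W.f (W.n-1)) v ∧ G.Edge w v) → v ∈ C ∪ G.ancestors C) ∧
      (¬(G.Edge (W.f (W.n-1)) v ∧ G.Edge w v) → v ∉ C)) :
    ∃ W' : NWalk G C a w, W'.n = W.n + 1 ∧ W'.f (W'.n - 1) = v := by
  have hn := W.npos
  refine ⟨⟨W.n + 1, by omega, fun t => if t ≤ W.n then W.f t else w, ?_, ?_, ?_, ?_⟩, rfl, ?_⟩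
  · simpa using W.first
  · simp
  · intro t ht
    rcases Nat.lt_or_ge t W.n with h' | h'
    · simpa [Nat.le_of_lt h', Nat.succ_le_of_lt h'] using W.adj t h'
    · have : t = W.n := by omega
      subst this
      have h1 : (W.n : ℕ) ≤ W.n := le_rfl
      simpa [h1, W.last] using hadj
  · intro t h1 h2
    rcases Nat.lt_or_ge t W.n with h' | h'
    · have e1 : t - 1 ≤ W.n := by omega
      have e2 : t ≤ W.n := by omega
      have e3 : t + 1 ≤ W.n := by omega
      simpa [e1, e2, e3] using W.ok t h1 h'
    · have ht' : t = W.n := by omega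
      subst ht'
      have e1 : W.n - 1 ≤ W.n := by omega
      have e2 : (W.n : ℕ) ≤ W.n := le_rfl
      have e3 : ¬ (W.n + 1 ≤ W.n) := by omega
      simpa [e1, e2, e3, W.last] using hok
  · simp [W.last]

lemma Reach.toNWalkAux {G : DAG V} {C : Set V} {a : V} :
    ∀ (v : V) (f : Option Bool), Reach G C a v f → ∀ d' : Bool, f = some d' →
      ∃ W : NWalk G C a v,
        (d' = true → G.Edge (W.f (W.n - 1)) v) ∧ (d' = false → G.Edge v (W.f (W.n - 1))) := by
  intro v f h
  induction h with
  | start => intro d' hd; exact absurd hd (by simp)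
  | out hr hcond he ih =>
    rename_i v w f
    intro d' hd
    have hd' : d' = true := by injection hd with h'; exact h'.symm
    subst hd'
    rcases f with _ | fb
    · have hva : v = a := reach_none hr
      subst hva
      refine ⟨NWalk.single (Or.inl he), fun _ => ?_, by simp⟩
      simpa [NWalk.single] using he
    · obtain ⟨W, hW⟩ := ih fb rfl
      have hvC : v ∉ C := hcond (by simp)
      have hlast : ¬ (G.Edge (W.f (W.n-1)) v ∧ G.Edge w v) := by
        rintro ⟨_, h2⟩; exact G.not_edge_both he h2
      obtain ⟨W', hn', hf'⟩ := W.snoc w (Or.inl he) ⟨fun hc => absurd hc hlast, fun _ => hvC⟩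
      exact ⟨W', fun _ => by rw [hf']; exact he, by simp⟩
  | into hr hc1 hc2 he ih =>
    rename_i v w f
    intro d' hd
    have hd' : d' = false := by injection hd with h'; exact h'.symm
    subst hd'
    rcases f with _ | fb
    · have hva : v = a := reach_none hr
      subst hva
      refine ⟨NWalk.single (Or.inr he), by simp, fun _ => ?_⟩
      simpa [NWalk.single] using he
    · obtain ⟨W, hW⟩ := ih fb rfl
      rcases fb with _ | _
      · -- arrived at v pointing out of v: noncollider
        have hvC : v ∉ C := hc2 rfl
        have hprev : G.Edge v (W.f (W.n-1)) := hW.2 rfl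
        have hlast : ¬ (G.Edge (W.f (W.n-1)) v ∧ G.Edge w v) := by
          rintro ⟨h1, _⟩; exact G.not_edge_both hprev h1
        obtain ⟨W', hn', hf'⟩ := W.snoc w (Or.inr he) ⟨fun hc => absurd hc hlast, fun _ => hvC⟩
        exact ⟨W', by simp, fun _ => by rw [hf']; exact he⟩
      · -- arrived into v: collider, v ∈ C
        have hvC : v ∈ C := hc1 rfl
        have hprev : G.Edge (W.f (W.n-1)) v := hW.1 rfl
        obtain ⟨W', hn', hf'⟩ := W.snoc w (Or.inr he)
          ⟨fun _ => Or.inl hvC, fun hc => absurd ⟨hprev, he⟩ hc⟩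
        exact ⟨W', by simp, fun _ => by rw [hf']; exact he⟩

lemma Reach.toNWalk {G : DAG V} {C : Set V} {a b : V} {d : Bool}
    (h : Reach G C a b (some d)) : Nonempty (NWalk G C a b) := by
  obtain ⟨W, -⟩ := Reach.toNWalkAux b (some d) h d rfl
  exact ⟨W⟩


/-- Shortcut a repeated vertex out of a walk. -/
lemma NWalk.shortcut {G : DAG V} {C : Set V} {a b : V} (W : NWalk G C a b) (hab : a ≠ b)
    {s t : ℕ} (hst : s < t) (htn : t ≤ W.n) (hft : W.f s = W.f t) :
    ∃ W' : NWalk G C a b, W'.n < W.n := by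
  classical
  have hnpos := W.npos
  set k := t - s with hk
  set n' := W.n - k with hn'
  have hkpos : 0 < k := by omega
  set f' : ℕ → V := fun r => if r ≤ s then W.f r else W.f (r + k) with hf'
  have hshift : ∀ r, s ≤ r → f' r = W.f (r + k) := by
    intro r hr
    rcases Nat.eq_or_lt_of_le hr with rfl | h'
    · simp only [hf', if_pos le_rfl]
      rw [hft]; congr 1; omega
    · simp only [hf', if_neg (by omega : ¬ r ≤ s)]
  have hlow : ∀ r, r ≤ s → f' r = W.f r := by
    intro r hr; simp only [hf', if_pos hr]
  have htne : t = W.n → s ≠ 0 := by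
    intro h1 h2
    apply hab
    rw [h2] at hft
    rw [W.first] at hft
    rw [h1, W.last] at hft
    exact hft
  have hn'pos : 0 < n' := by
    rcases Nat.eq_zero_or_pos s with rfl | hs
    · have : t ≠ W.n := fun h => htne h rfl
      omega
    · omega
  have hsn' : s ≤ n' := by omega
  refine ⟨⟨n', hn'pos, f', ?_, ?_, ?_, ?_⟩, (by omega : n' < W.n)⟩
  · rw [hlow 0 (by omega), W.first]
  · rcases Nat.eq_or_lt_of_le hsn' with h' | h'
    · -- t = n case
      have htn' : t = W.n := by omega
      rw [← h', hlow s le_rfl, hft, htn', W.last]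
    · rw [hshift n' (by omega)]
      have : n' + k = W.n := by omega
      rw [this, W.last]
  · intro r hr
    rcases Nat.lt_or_ge r s with h' | h'
    · rw [hlow r (by omega), hlow (r+1) (by omega)]
      exact W.adj r (by omega)
    · rw [hshift r h', hshift (r+1) (by omega)]
      have : r + 1 + k = r + k + 1 := by omega
      rw [this]
      exact W.adj (r + k) (by omega)
  · intro r h1 h2
    have htltn : s < n' → t < W.n := by omega
    rcases Nat.lt_or_ge (r+1) (s+1) with hcase | hcase
    · -- r < s : wholly in prefix
      rw [hlow (r-1) (by omega), hlow r (by omega), hlow (r+1) (by omega)]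
      exact W.ok r h1 (by omega)
    · rcases Nat.lt_or_ge s r with hcase2 | hcase2
      · -- r > s: wholly in (shifted) suffix
        rw [hshift (r-1) (by omega), hshift r (by omega), hshift (r+1) (by omega)]
        have e1 : r - 1 + k = r + k - 1 := by omega
        have e2 : r + 1 + k = r + k + 1 := by omega
        rw [e1, e2]
        exact W.ok (r + k) (by omega) (by omega)
      · -- r = s: the junction
        have hrs : r = s := by omega
        subst hrs
        have hrn : r < W.n := by omega
        have htn2 : t < W.n := htltn h2
        rw [hlow (r-1) (by omega), hlow r le_rfl, hshift (r+1) (by omega)]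
        have e2 : r + 1 + k = t + 1 := by omega
        rw [e2]
        constructor
        · rintro ⟨he1, he2⟩
          by_cases hC : W.f r ∈ C
          · exact Or.inl hC
          · by_cases hcols : G.Edge (W.f (r-1)) (W.f r) ∧ G.Edge (W.f (r+1)) (W.f r)
            · exact (W.ok r h1 hrn).1 hcols
            · have h3 : ¬ G.Edge (W.f (r+1)) (W.f r) := fun h => hcols ⟨he1, h⟩
              have h4 : G.Edge (W.f r) (W.f (r+1)) := (W.adj r hrn).resolve_right h3
              -- find the first reversal between r and t
              have hex : ∃ q, r ≤ q ∧ q < t ∧ ¬ G.Edge (W.f q) (W.f (q+1)) := by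
                by_contra hall
                push_neg at hall
                have hchain := transGen_of_chain (G := G) W.f hst
                  (fun q hq1 hq2 => hall q hq1 hq2)
                rw [← hft] at hchain
                exact G.acyclic _ hchain
              set q := Nat.find hex with hqdef
              obtain ⟨hq1, hq2, hq3⟩ := Nat.find_spec hex
              have hmin : ∀ q', q' < q → ¬(r ≤ q' ∧ q' < t ∧ ¬ G.Edge (W.f q') (W.f (q'+1))) :=
                fun q' h => Nat.find_min hex h
              have hqr : r < q := by
                rcases Nat.eq_or_lt_of_le hq1 with h' | h'
                · exact absurd h4 (by rw [h']; exact hq3)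
                · exact h'
              have hforward : ∀ p, r ≤ p → p < q → G.Edge (W.f p) (W.f (p+1)) := by
                intro p hp1 hp2
                by_contra hne
                exact hmin p hp2 ⟨hp1, by omega, hne⟩
              have hcq1 : G.Edge (W.f (q-1)) (W.f q) := by
                have := hforward (q-1) (by omega) (by omega)
                have e : q - 1 + 1 = q := by omega
                rwa [e] at this
              have hcq2 : G.Edge (W.f (q+1)) (W.f q) := (W.adj q (by omega)).resolve_left hq3
              have hqok := (W.ok q (by omega) (by omega)).1 ⟨hcq1, hcq2⟩
              have htg : TransGen G.Edge (W.f r) (W.f q) := transGen_of_chain W.f hqr hforward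
              right
              refine ⟨hC, ?_⟩
              rcases NWalk.mem_union_cases hqok with hqc | ⟨-, c, hcC, htg2⟩
              · exact ⟨W.f q, hqc, htg⟩
              · exact ⟨c, hcC, htg.trans htg2⟩
        · intro hnc hC
          have hcol_s : G.Edge (W.f (r-1)) (W.f r) ∧ G.Edge (W.f (r+1)) (W.f r) := by
            by_contra h
            exact (W.ok r h1 hrn).2 h hC
          have hcol_t : G.Edge (W.f (t-1)) (W.f t) ∧ G.Edge (W.f (t+1)) (W.f t) := by
            by_contra h
            refine (W.ok t (by omega) htn2).2 h ?_
            rw [← hft]; exact hC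
          exact hnc ⟨hcol_s.1, by rw [hft]; exact hcol_t.2⟩

lemma NWalk.toPath {G : DAG V} {C : Set V} {a b : V} (W : NWalk G C a b) (hab : a ≠ b) :
    ∃ π : Path G a b, ¬ π.Blocked C := by
  classical
  obtain ⟨N, hN⟩ : ∃ N, W.n = N := ⟨W.n, rfl⟩
  induction N using Nat.strong_induction_on generalizing W with
  | _ N ih =>
  by_cases hinj : ∀ i, i ≤ W.n → ∀ j, j ≤ W.n → W.f i = W.f j → i = j
  · refine ⟨⟨W.n, W.npos, fun i => W.f i.1, ?_, ?_, ?_, ?_⟩, ?_⟩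
    · exact W.first
    · exact W.last
    · intro i
      exact W.adj i.1 i.2
    · intro i j hij
      exact Fin.ext (hinj i.1 (by omega) j.1 (by omega) hij)
    · rintro ⟨t, h1, h2, hcase⟩
      rcases hcase with ⟨hnc, hmem⟩ | ⟨hc, hmem⟩
      · exact (W.ok t h1 h2).2 hnc hmem
      · exact hmem ((W.ok t h1 h2).1 hc)
  · push_neg at hinj
    obtain ⟨i, hi, j, hj, hfij, hij⟩ := hinj
    rcases Nat.lt_or_ge i j with h' | h'
    · obtain ⟨W', hW'⟩ := W.shortcut hab h' hj hfij
      exact ih W'.n (by omega) W' rfl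
    · have h'' : j < i := by omega
      obtain ⟨W', hW'⟩ := W.shortcut hab h'' hi hfij.symm
      exact ih W'.n (by omega) W' rfl

/-- Convert an unblocked path to a weak walk. -/
lemma Path.toNWalk {G : DAG V} {C : Set V} {a b : V} (π : Path G a b)
    (hb : ¬ π.Blocked C) : Nonempty (NWalk G C a b) := by
  classical
  refine ⟨⟨π.n, π.npos, fun t => if h : t ≤ π.n then π.f ⟨t, by omega⟩ else b,
    ?_, ?_, ?_, ?_⟩⟩
  · rw [dif_pos (Nat.zero_le _)]
    have : (⟨0, by omega⟩ : Fin (π.n + 1)) = 0 := Fin.ext (by simp)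
    rw [this, π.first]
  · rw [dif_pos le_rfl]
    have : (⟨π.n, by omega⟩ : Fin (π.n + 1)) = Fin.last π.n := Fin.ext (by simp)
    rw [this, π.last]
  · intro t ht
    rw [dif_pos (by omega : t ≤ π.n), dif_pos (by omega : t + 1 ≤ π.n)]
    have := π.adj ⟨t, ht⟩
    simpa [Fin.castSucc_mk, Fin.succ_mk] using this
  · intro t h1 h2
    rw [dif_pos (by omega : t - 1 ≤ π.n), dif_pos (by omega : t ≤ π.n),
      dif_pos (by omega : t + 1 ≤ π.n)]
    have hnb : ¬ ((¬ π.ColliderAt t h1 h2 ∧ π.f ⟨t, by omega⟩ ∈ C) ∨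
        (π.ColliderAt t h1 h2 ∧ π.f ⟨t, by omega⟩ ∉ C ∪ G.ancestors C)) := by
      intro h
      exact hb ⟨t, h1, h2, h⟩
    push_neg at hnb
    constructor
    · intro hc
      exact hnb.2 hc
    · intro hnc
      exact hnb.1 hnc

/-- Reverse a walk. -/
lemma NWalk.reverse {G : DAG V} {C : Set V} {a b : V} (W : NWalk G C a b) :
    Nonempty (NWalk G C b a) := by
  have hn := W.npos
  refine ⟨⟨W.n, W.npos, fun t => W.f (W.n - t), ?_, ?_, ?_, ?_⟩⟩
  · simpa using W.last
  · simpa using W.first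
  · intro t ht
    have h1 : W.n - t - 1 < W.n := by omega
    have h2 : W.n - t - 1 + 1 = W.n - t := by omega
    have h3 : W.n - (t+1) = W.n - t - 1 := by omega
    have := (W.adj (W.n - t - 1) h1).symm
    rw [h2] at this
    rw [h3]
    exact this
  · intro t h1 h2
    have e1 : W.n - (t-1) = W.n - t + 1 := by omega
    have e2 : W.n - (t+1) = W.n - t - 1 := by omega
    have e3 : W.n - t - 1 + 1 = W.n - t := by omega
    rw [e1, e2]
    have hs1 : 0 < W.n - t := by omega
    have hs2 : W.n - t < W.n := by omega
    have hok := W.ok (W.n - t) hs1 hs2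
    exact ⟨fun ⟨hx, hy⟩ => hok.1 ⟨hy, hx⟩, fun hnc => hok.2 (fun ⟨hx, hy⟩ => hnc ⟨hy, hx⟩)⟩

/-- ℕ-indexed access to a path. -/
def Path.nf {G : DAG V} {a b : V} (π : Path G a b) : ℕ → V :=
  fun t => if h : t ≤ π.n then π.f ⟨t, by omega⟩ else b

lemma Path.nf_zero {G : DAG V} {a b : V} (π : Path G a b) : π.nf 0 = a := by
  simp only [Path.nf]
  rw [dif_pos (Nat.zero_le _)]
  have : (⟨0, by omega⟩ : Fin (π.n + 1)) = 0 := Fin.ext (by simp)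
  rw [this, π.first]

lemma Path.nf_last {G : DAG V} {a b : V} (π : Path G a b) : π.nf π.n = b := by
  simp only [Path.nf]
  rw [dif_pos le_rfl]
  have : (⟨π.n, by omega⟩ : Fin (π.n + 1)) = Fin.last π.n := Fin.ext (by simp)
  rw [this, π.last]

lemma Path.nf_adj {G : DAG V} {a b : V} (π : Path G a b) {t : ℕ} (ht : t < π.n) :
    G.Adj (π.nf t) (π.nf (t+1)) := by
  simp only [Path.nf]
  rw [dif_pos (by omega : t ≤ π.n), dif_pos (by omega : t + 1 ≤ π.n)]
  have := π.adj ⟨t, ht⟩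
  simpa [Fin.castSucc_mk, Fin.succ_mk] using this

lemma Path.blocked_of_nf {G : DAG V} {a b : V} (π : Path G a b) {C : Set V} {t : ℕ}
    (h1 : 0 < t) (h2 : t < π.n)
    (h : (¬(G.Edge (π.nf (t-1)) (π.nf t) ∧ G.Edge (π.nf (t+1)) (π.nf t)) ∧ π.nf t ∈ C) ∨
      ((G.Edge (π.nf (t-1)) (π.nf t) ∧ G.Edge (π.nf (t+1)) (π.nf t)) ∧
        π.nf t ∉ C ∪ G.ancestors C)) : π.Blocked C := by
  refine ⟨t, h1, h2, ?_⟩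
  simp only [Path.nf] at h
  rw [dif_pos (by omega : t - 1 ≤ π.n), dif_pos (by omega : t ≤ π.n),
    dif_pos (by omega : t + 1 ≤ π.n)] at h
  exact h

lemma exists_minimal {P : ℕ → Prop} (h : ∃ n, P n) : ∃ n, P n ∧ ∀ m, m < n → ¬ P m := by
  classical
  exact ⟨Nat.find h, Nat.find_spec h, fun m hm => Nat.find_min h hm⟩

/-- A single edge, as a path. -/
def Path.single {G : DAG V} {i j : V} (h : G.Adj i j) : Path G i j where
  n := 1
  npos := one_pos
  f := fun t => if t.1 = 0 then i else j
  first := by simp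
  last := by simp [Fin.last]
  adj := by
    intro t
    have ht : t.1 = 0 := by omega
    simp [Fin.castSucc, Fin.succ, ht]
    exact h
  inj := by
    intro s t hst
    have hij : i ≠ j := G.adj_ne h
    have hs := s.2; have ht := t.2
    have hs' : s.1 = 0 ∨ s.1 = 1 := by omega
    have ht' : t.1 = 0 ∨ t.1 = 1 := by omega
    rcases hs' with h1 | h1 <;> rcases ht' with h2 | h2 <;>
      simp [h1, h2] at hst ⊢ <;> first | (exact Fin.ext (by omega)) | (exact absurd hst hij) |
        (exact absurd hst.symm hij)

/-- A single edge is an unblocked path. -/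
lemma adj_not_dSep {G : DAG V} {i j : V} (h : G.Adj i j) (C : Set V) :
    ¬ G.dSep {i} {j} C := by
  intro hd
  obtain ⟨t, h1, h2, -⟩ := hd i rfl j rfl (Path.single h)
  have hn : (Path.single h).n = 1 := rfl
  omega

/-- Non-adjacent vertices with `i` not an ancestor of `j` are separated by `pa(i)`. -/
lemma sep_pa {G : DAG V} {i j : V} (hij : i ≠ j) (hnadj : ¬ G.Adj i j)
    (hanc : ¬ TransGen G.Edge i j) :
    G.dSep {i} {j} {w | G.Edge w i} := by
  classical
  rintro a rfl b rfl π
  set C : Set V := {w | G.Edge w a} with hC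
  have hnf0 := π.nf_zero
  have hnfl := π.nf_last
  have hn2 : 2 ≤ π.n := by
    rcases Nat.lt_or_ge π.n 2 with h' | h'
    · exfalso
      have hn1 : π.n = 1 := by have := π.npos; omega
      have := π.nf_adj (t := 0) (by omega)
      rw [hnf0] at this
      rw [show (0:ℕ)+1 = π.n from by omega, hnfl] at this
      exact hnadj this
    · exact h'
  by_cases hfirst : G.Edge (π.nf 1) a
  · refine π.blocked_of_nf (t := 1) one_pos (by omega) (Or.inl ⟨?_, hfirst⟩)
    rintro ⟨hx, -⟩
    rw [show (1:ℕ)-1 = 0 from rfl, hnf0] at hx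
    exact G.not_edge_both hx hfirst
  · have hfwd0 : G.Edge a (π.nf 1) := by
      have := π.nf_adj (t := 0) (by omega)
      rw [hnf0] at this
      exact this.resolve_right hfirst
    have hex : ∃ q, q < π.n ∧ ¬ G.Edge (π.nf q) (π.nf (q+1)) := by
      by_contra hall
      push_neg at hall
      have := transGen_of_chain (G := G) π.nf (show 0 < π.n by omega)
        (fun r _ hr2 => hall r hr2)
      rw [hnf0, hnfl] at this
      exact hanc this
    obtain ⟨q, ⟨hq1, hq2⟩, hminP⟩ := exists_minimal hex
    have hmin : ∀ p, p < q → p < π.n → G.Edge (π.nf p) (π.nf (p+1)) := by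
      intro p hp1 hp2
      by_contra hne
      exact hminP p hp1 ⟨hp2, hne⟩
    have hqpos : 0 < q := by
      rcases Nat.eq_zero_or_pos q with h' | h'
      · rw [h'] at hq2
        rw [hnf0] at hq2
        exact absurd hfwd0 hq2
      · exact h'
    have hchain : ∀ p, p ≤ q → 0 < p → TransGen G.Edge a (π.nf p) := by
      intro p hp1 hp2
      have := transGen_of_chain (G := G) π.nf hp2 (fun r _ hr2 => hmin r (by omega) (by omega))
      rwa [hnf0] at this
    refine π.blocked_of_nf (t := q) hqpos hq1 (Or.inr ⟨⟨?_, ?_⟩, ?_⟩)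
    · have := hmin (q-1) (by omega) (by omega)
      rwa [show q - 1 + 1 = q from by omega] at this
    · exact (π.nf_adj hq1).resolve_left hq2
    · rintro (hmem | hmem)
      · exact G.acyclic a ((hchain q le_rfl hqpos).tail hmem)
      · obtain ⟨-, c, hc, htg⟩ := hmem
        exact G.acyclic a (((hchain q le_rfl hqpos).trans htg).tail hc)

lemma not_dSep_singleton_iff {G : DAG V} {i j : V} {C : Set V} :
    ¬ G.dSep {i} {j} C ↔ ∃ π : Path G i j, ¬ π.Blocked C := by
  constructor
  · intro h
    by_contra h'
    push_neg at h'
    refine h ?_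
    rintro a rfl b rfl π
    exact h' π
  · rintro ⟨π, hπ⟩ hd
    exact hπ (hd i rfl j rfl π)

lemma not_dSep_symm {G : DAG V} {i j : V} {C : Set V} (hij : i ≠ j)
    (h : ¬ G.dSep {i} {j} C) : ¬ G.dSep {j} {i} C := by
  rw [not_dSep_singleton_iff] at h ⊢
  obtain ⟨π, hπ⟩ := h
  obtain ⟨W⟩ := π.toNWalk hπ
  obtain ⟨W'⟩ := W.reverse
  exact W'.toPath hij.symm

/-- Any two non-adjacent vertices can be d-separated. -/
lemma exists_sep {G : DAG V} {i j : V} (hij : i ≠ j) (hnadj : ¬ G.Adj i j) :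
    ∃ C : Set V, i ∉ C ∧ j ∉ C ∧ G.dSep {i} {j} C := by
  by_cases hanc : TransGen G.Edge i j
  · have hanc' : ¬ TransGen G.Edge j i := fun h => G.acyclic i (hanc.trans h)
    refine ⟨{w | G.Edge w j}, ?_, ?_, ?_⟩
    · intro h
      exact hnadj (Or.inl h)
    · exact G.not_edge_self j
    · have hsep := sep_pa hij.symm (fun h => hnadj h.symm) hanc'
      by_contra hd
      exact (not_dSep_symm hij hd) hsep
  · refine ⟨{w | G.Edge w i}, G.not_edge_self i, ?_, sep_pa hij hnadj hanc⟩
    intro h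
    exact hnadj (Or.inr h)

/-- The two-edge path `i ~ k ~ j`. -/
def Path.three {G : DAG V} {i k j : V} (hik : G.Adj i k) (hkj : G.Adj k j)
    (hij : i ≠ j) (hik' : i ≠ k) (hjk' : j ≠ k) : Path G i j where
  n := 2
  npos := two_pos
  f := fun t => if t.1 = 0 then i else if t.1 = 1 then k else j
  first := by simp
  last := by simp [Fin.last]
  adj := by
    intro t
    have ht : t.1 = 0 ∨ t.1 = 1 := by omega
    rcases ht with ht | ht <;> simp [Fin.castSucc, Fin.succ, ht]
    · exact hik
    · exact hkj
  inj := by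
    intro s t hst
    have hs : s.1 = 0 ∨ s.1 = 1 ∨ s.1 = 2 := by omega
    have ht : t.1 = 0 ∨ t.1 = 1 ∨ t.1 = 2 := by omega
    have hjk'' := hjk'.symm
    have hik'' := hik'.symm
    rcases hs with h1 | h1 | h1 <;> rcases ht with h2 | h2 | h2 <;>
      simp [h1, h2] at hst ⊢ <;> first
        | (exact Fin.ext (by omega))
        | (exact absurd hst (by assumption))
        | (exact absurd hst.symm (by assumption))

lemma Path.three_blocked {G : DAG V} {i k j : V} {C : Set V} (hik : G.Adj i k)
    (hkj : G.Adj k j) (hij : i ≠ j) (hik' : i ≠ k) (hjk' : j ≠ k)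
    (hb : (Path.three hik hkj hij hik' hjk').Blocked C) :
    (¬(G.Edge i k ∧ G.Edge j k) ∧ k ∈ C) ∨
      ((G.Edge i k ∧ G.Edge j k) ∧ k ∉ C ∪ G.ancestors C) := by
  obtain ⟨t, h1, h2, hc⟩ := hb
  have hn : (Path.three hik hkj hij hik' hjk').n = 2 := rfl
  have ht : t = 1 := by omega
  subst ht
  have e0 : (Path.three hik hkj hij hik' hjk').f ⟨1-1, by omega⟩ = i := rfl
  have e1 : (Path.three hik hkj hij hik' hjk').f ⟨1, by omega⟩ = k := rfl
  have e2 : (Path.three hik hkj hij hik' hjk').f ⟨1+1, by omega⟩ = j := rfl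
  rcases hc with ⟨hnc, hmem⟩ | ⟨hcc, hmem⟩
  · left
    constructor
    · intro hcc
      refine hnc ?_
      rw [Path.ColliderAt, e0, e1, e2]
      exact hcc
    · rwa [e1] at hmem
  · right
    rw [Path.ColliderAt, e0, e1, e2] at hcc
    rw [e1] at hmem
    exact ⟨hcc, hmem⟩

/-- Markov equivalent DAGs have the same adjacencies. -/
lemma MarkovEquiv.adj {G₁ G₂ : DAG V} (h : MarkovEquiv G₁ G₂) {i j : V}
    (hadj : G₁.Adj i j) : G₂.Adj i j := by
  have hij := G₁.adj_ne hadj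
  by_contra hnadj
  obtain ⟨C, hiC, hjC, hsep⟩ := exists_sep hij hnadj
  have hd : G₁.dSep {i} {j} C := by
    refine (h {i} {j} C ?_ ?_ ?_).mpr hsep
    · exact Set.disjoint_singleton.mpr hij
    · exact Set.disjoint_singleton_left.mpr hiC
    · exact Set.disjoint_singleton_left.mpr hjC
  exact adj_not_dSep hadj C hd

lemma MarkovEquiv.symm {G₁ G₂ : DAG V} (h : MarkovEquiv G₁ G₂) : MarkovEquiv G₂ G₁ :=
  fun A B C h1 h2 h3 => (h A B C h1 h2 h3).symm

lemma MarkovEquiv.trans {G₁ G₂ G₃ : DAG V} (h : MarkovEquiv G₁ G₂)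
    (h' : MarkovEquiv G₂ G₃) : MarkovEquiv G₁ G₃ :=
  fun A B C h1 h2 h3 => (h A B C h1 h2 h3).trans (h' A B C h1 h2 h3)

/-- Markov equivalent DAGs have the same collider v-configurations. -/
lemma MarkovEquiv.collider {G₁ G₂ : DAG V} (h : MarkovEquiv G₁ G₂) {i k j : V}
    (hcol : G₁.IsCollider i k j) : G₂.IsCollider i k j := by
  obtain ⟨⟨hij, hik, hjk, hAik, hAjk, hnadj⟩, he1, he2⟩ := hcol
  have hAik₂ : G₂.Adj i k := h.adj hAik
  have hAjk₂ : G₂.Adj j k := h.adj hAjk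
  have hnadj₂ : ¬ G₂.Adj i j := fun hadj => hnadj (h.symm.adj hadj)
  refine ⟨⟨hij, hik, hjk, hAik₂, hAjk₂, hnadj₂⟩, ?_⟩
  by_contra hne
  obtain ⟨C, hiC, hjC, hsep₂⟩ := exists_sep hij hnadj₂
  -- the 3-path in G₂ is blocked, and k is a non-collider there, so k ∈ C
  have hkj₂ : G₂.Adj k j := hAjk₂.symm
  have hb₂ := hsep₂ i rfl j rfl (Path.three hAik₂ hkj₂ hij hik hjk)
  have hkC : k ∈ C := by
    rcases Path.three_blocked hAik₂ hkj₂ hij hik hjk hb₂ with ⟨-, hmem⟩ | ⟨hcc, -⟩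
    · exact hmem
    · exact absurd hcc hne
  -- transfer the separation to G₁
  have hsep₁ : G₁.dSep {i} {j} C := by
    refine (h {i} {j} C ?_ ?_ ?_).mpr hsep₂
    · exact Set.disjoint_singleton.mpr hij
    · exact Set.disjoint_singleton_left.mpr hiC
    · exact Set.disjoint_singleton_left.mpr hjC
  have hkj₁ : G₁.Adj k j := hAjk.symm
  have hb₁ := hsep₁ i rfl j rfl (Path.three hAik hkj₁ hij hik hjk)
  rcases Path.three_blocked hAik hkj₁ hij hik hjk hb₁ with ⟨hnc, -⟩ | ⟨-, hmem⟩
  · exact hnc ⟨he1, he2⟩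
  · exact hmem (Or.inl hkC)

/-! ### Covered edge flips -/

/-- `x → y` is a covered edge: the parents of `y` are exactly the parents of `x` plus `x`. -/
def Covered (G : DAG V) (x y : V) : Prop :=
  G.Edge x y ∧ ∀ w, G.Edge w x ↔ (G.Edge w y ∧ w ≠ x)

/-- `H` is obtained from `G` by reversing the edge `x → y`. -/
def IsFlip (G H : DAG V) (x y : V) : Prop :=
  ∀ a b, H.Edge a b ↔ ((G.Edge a b ∧ ¬(a = x ∧ b = y)) ∨ (a = y ∧ b = x))

lemma flipEdge_acyclic {G : DAG V} {x y : V} (hcov : Covered G x y) (c : V) :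
    ¬ TransGen (fun a b => (G.Edge a b ∧ ¬(a = x ∧ b = y)) ∨ (a = y ∧ b = x)) c c := by
  set r : V → V → Prop := fun a b => G.Edge a b ∧ ¬(a = x ∧ b = y) with hr
  have hmono : ∀ {u v}, r u v → G.Edge u v := fun h => h.1
  have hdecomp : ∀ u v, TransGen (fun a b => r a b ∨ (a = y ∧ b = x)) u v →
      TransGen r u v ∨ (ReflTransGen r u y ∧ ReflTransGen r x v) := by
    intro u v h
    induction h with
    | single e =>
      rcases e with e | ⟨rfl, rfl⟩
      · exact Or.inl (TransGen.single e)
      · exact Or.inr ⟨ReflTransGen.refl, ReflTransGen.refl⟩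
    | tail h e ih =>
      rcases e with e | ⟨rfl, rfl⟩
      · rcases ih with ih | ⟨ih1, ih2⟩
        · exact Or.inl (ih.tail e)
        · exact Or.inr ⟨ih1, ih2.tail e⟩
      · rcases ih with ih | ⟨ih1, -⟩
        · exact Or.inr ⟨ih.to_reflTransGen, ReflTransGen.refl⟩
        · exact Or.inr ⟨ih1, ReflTransGen.refl⟩
  have hxy : ¬ ReflTransGen r x y := by
    intro h
    rcases h.cases_tail with h' | ⟨w, h1, h2⟩
    · exact G.edge_ne hcov.1 h'.symm
    · have hw : G.Edge w y ∧ w ≠ x := ⟨h2.1, fun h => h2.2 ⟨h, rfl⟩⟩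
      have hwx : G.Edge w x := (hcov.2 w).mpr hw
      have : ReflTransGen G.Edge x w := ReflTransGen.mono (fun _ _ h => hmono h) _ _ h1
      exact G.acyclic x (TransGen.tail' this hwx)
  intro h
  rcases hdecomp c c h with h' | ⟨h1, h2⟩
  · exact G.acyclic c (TransGen.mono (fun _ _ h => hmono h) _ _ h')
  · exact hxy (h2.trans h1)

/-- The flipped DAG exists. -/
def flip (G : DAG V) (x y : V) (hcov : Covered G x y) : DAG V where
  Edge := fun a b => (G.Edge a b ∧ ¬(a = x ∧ b = y)) ∨ (a = y ∧ b = x)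
  acyclic := flipEdge_acyclic hcov

lemma flip_isFlip (G : DAG V) (x y : V) (hcov : Covered G x y) :
    IsFlip G (flip G x y hcov) x y := fun _ _ => Iff.rfl

section Transfer

variable {G H : DAG V} {x y : V}

lemma IsFlip.not_xy (hf : IsFlip G H x y) (hcov : Covered G x y) : ¬ H.Edge x y := by
  intro h
  rcases (hf x y).mp h with ⟨-, h2⟩ | ⟨h1, -⟩
  · exact h2 ⟨rfl, rfl⟩
  · exact G.edge_ne hcov.1 h1

lemma IsFlip.yx (hf : IsFlip G H x y) : H.Edge y x :=
  (hf y x).mpr (Or.inr ⟨rfl, rfl⟩)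

lemma IsFlip.of_G (hf : IsFlip G H x y) {u v : V} (h : G.Edge u v)
    (hne : ¬(u = x ∧ v = y)) : H.Edge u v := (hf u v).mpr (Or.inl ⟨h, hne⟩)

/-- Covered edge of the flipped graph. -/
lemma IsFlip.covered_flip (hf : IsFlip G H x y) (hcov : Covered G x y) : Covered H y x := by
  have hxy := hcov.1
  constructor
  · exact hf.yx
  · intro w
    constructor
    · intro h
      rcases (hf w y).mp h with ⟨h1, h2⟩ | ⟨rfl, h2⟩
      · have hwx : w ≠ x := fun he => h2 ⟨he, rfl⟩
        have : G.Edge w x := (hcov.2 w).mpr ⟨h1, hwx⟩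
        refine ⟨hf.of_G this ?_, ?_⟩
        · rintro ⟨rfl, -⟩
          exact hwx rfl
        · exact fun he => G.not_edge_self y (he ▸ h1)
      · exact absurd h2 (fun h' => G.edge_ne hxy h'.symm)
    · rintro ⟨h1, hwy⟩
      rcases (hf w x).mp h1 with ⟨h1', h2'⟩ | ⟨rfl, -⟩
      · have hwx : w ≠ x := G.edge_ne h1'
        have : G.Edge w y := ((hcov.2 w).mp h1').1
        refine hf.of_G this ?_
        rintro ⟨rfl, -⟩
        exact hwx rfl
      · exact absurd rfl hwy

/-- The flip of the flip is the original. -/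
lemma IsFlip.symm (hf : IsFlip G H x y) (hcov : Covered G x y) : IsFlip H G y x := by
  intro u v
  constructor
  · intro h
    by_cases huv : u = x ∧ v = y
    · obtain ⟨rfl, rfl⟩ := huv
      exact Or.inr ⟨rfl, rfl⟩
    · refine Or.inl ⟨hf.of_G h huv, ?_⟩
      rintro ⟨rfl, rfl⟩
      exact G.not_edge_both hcov.1 h
  · rintro (⟨h1, h2⟩ | ⟨rfl, rfl⟩)
    · rcases (hf u v).mp h1 with ⟨h1', -⟩ | ⟨rfl, rfl⟩
      · exact h1'
      · exact absurd ⟨rfl, rfl⟩ h2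
    · exact hcov.1


variable {C : Set V} {a : V}

/-- Memory invariant used when the simulated walk sits at `x` (arrived outward). -/
def MX3 (H : DAG V) (C : Set V) (a x y : V) : Prop :=
  x = a ∨ Reach H C a x (some false) ∨
    (Reach H C a x (some true) ∧
      ((y ∈ C ∧ Reach H C a y (some true)) ∨ (y ∉ C ∧ (y = a ∨ Reach H C a y (some false)))))

/-- Memory invariant used when the simulated walk sits at `y` (arrived inward). -/
def MXX (H : DAG V) (C : Set V) (a x y : V) : Prop :=
  x = a ∨ (x ∉ C ∧ (Reach H C a x (some false) ∨
    (Reach H C a x (some true) ∧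
      ((y ∈ C ∧ Reach H C a y (some true)) ∨
        (y ∉ C ∧ (y = a ∨ Reach H C a y (some false) ∨ Reach H C a y (some true)))))))

/-- Simulation invariant. -/
def Theta (H : DAG V) (C : Set V) (a x y : V) (v : V) (f : Option Bool) : Prop :=
  Reach H C a v f ∨ (v = y ∧ f = some true ∧ MXX H C a x y) ∨
    (v = x ∧ f = some false ∧ MX3 H C a x y)

section TransferLemmas

variable (hcov : Covered G x y) (hf : IsFlip G H x y)

include hcov hf

lemma flip_x_ne_y : x ≠ y := G.edge_ne hcov.1

lemma flip_no_yx : ¬ G.Edge y x := G.not_edge_both hcov.1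

/-- out-capability at `x`. -/
lemma MX3.out_x (h : MX3 H C a x y) (hxC : x ∉ C) {w : V} (he : G.Edge x w) (hwy : w ≠ y) :
    Reach H C a w (some true) := by
  have hH : H.Edge x w := hf.of_G he (by rintro ⟨-, rfl⟩; exact hwy rfl)
  rcases h with rfl | hF | ⟨hT, -⟩
  · exact Reach.out Reach.start (fun h => absurd rfl h) hH
  · exact Reach.out hF (fun _ => hxC) hH
  · exact Reach.out hT (fun _ => hxC) hH

/-- into-capability at `x`. -/
lemma MX3.into_x (h : MX3 H C a x y) (hxC : x ∉ C) {w : V} (he : G.Edge w x) :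
    Reach H C a w (some false) := by
  have hwx : w ≠ x := G.edge_ne he
  have hwy : w ≠ y := by
    rintro rfl
    exact flip_no_yx hcov hf he
  have hH : H.Edge w x := hf.of_G he (by rintro ⟨-, h'⟩; exact flip_x_ne_y hcov hf h')
  have hGwy : G.Edge w y := ((hcov.2 w).mp he).1
  have hHwy : H.Edge w y := hf.of_G hGwy (by rintro ⟨rfl, -⟩; exact hwx rfl)
  rcases h with rfl | hF | ⟨hT, ⟨hyC, hyT⟩ | ⟨hyC, rfl | hyF⟩⟩
  · exact Reach.into Reach.start (by simp) (by simp) hH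
  · exact Reach.into hF (by simp) (fun _ => hxC) hH
  · exact Reach.into hyT (fun _ => hyC) (by simp) hHwy
  · exact Reach.into Reach.start (by simp) (by simp) hHwy
  · exact Reach.into hyF (by simp) (fun _ => hyC) hHwy

/-- out-capability at `y`. -/
lemma MXX.out_y (h : MXX H C a x y) (hyC : y ∉ C) {w : V} (he : G.Edge y w) :
    Reach H C a w (some true) := by
  have hH : H.Edge y w := hf.of_G he
    (by rintro ⟨h', -⟩; exact flip_x_ne_y hcov hf h'.symm)
  have hHyx : H.Edge y x := hf.yx
  rcases h with rfl | ⟨hxC, hF | ⟨hT, ⟨hyC', hyT⟩ | ⟨-, rfl | hyF | hyT⟩⟩⟩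
  · -- x = a : get (y, false) by moving through the flipped edge from the start
    exact Reach.out (Reach.into Reach.start (by simp) (by simp) hHyx) (fun _ => hyC) hH
  · exact Reach.out (Reach.into hF (by simp) (fun _ => hxC) hHyx) (fun _ => hyC) hH
  · exact absurd hyC' hyC
  · exact Reach.out Reach.start (fun h => absurd rfl h) hH
  · exact Reach.out hyF (fun _ => hyC) hH
  · exact Reach.out hyT (fun _ => hyC) hH

/-- into-capability at `y` (for `w ≠ x`). -/
lemma MXX.into_y (h : MXX H C a x y) (hyC : y ∈ C) {w : V} (he : G.Edge w y) (hwx : w ≠ x) :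
    Reach H C a w (some false) := by
  have hGwx : G.Edge w x := (hcov.2 w).mpr ⟨he, hwx⟩
  have hHwx : H.Edge w x := hf.of_G hGwx
    (by rintro ⟨-, h'⟩; exact flip_x_ne_y hcov hf h')
  have hHwy : H.Edge w y := hf.of_G he (by rintro ⟨rfl, -⟩; exact hwx rfl)
  rcases h with rfl | ⟨hxC, hF | ⟨hT, ⟨-, hyT⟩ | ⟨hyC', -⟩⟩⟩
  · exact Reach.into Reach.start (by simp) (by simp) hHwx
  · exact Reach.into hF (by simp) (fun _ => hxC) hHwx
  · exact Reach.into hyT (fun _ => hyC) (by simp) hHwy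
  · exact absurd hyC hyC'

lemma MXX.toMX3 (h : MXX H C a x y) (hyC : y ∈ C) : MX3 H C a x y := by
  rcases h with rfl | ⟨hxC, hF | ⟨hT, ⟨-, hyT⟩ | ⟨hyC', -⟩⟩⟩
  · exact Or.inl rfl
  · exact Or.inr (Or.inl hF)
  · exact Or.inr (Or.inr ⟨hT, Or.inl ⟨hyC, hyT⟩⟩)
  · exact absurd hyC hyC'

lemma MX3.toMXX (h : MX3 H C a x y) (hxC : x ∉ C) : MXX H C a x y := by
  rcases h with rfl | hF | ⟨hT, ⟨hyC, hyT⟩ | ⟨hyC, hsub⟩⟩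
  · exact Or.inl rfl
  · exact Or.inr ⟨hxC, Or.inl hF⟩
  · exact Or.inr ⟨hxC, Or.inr ⟨hT, Or.inl ⟨hyC, hyT⟩⟩⟩
  · refine Or.inr ⟨hxC, Or.inr ⟨hT, Or.inr ⟨hyC, ?_⟩⟩⟩
    rcases hsub with rfl | hyF
    · exact Or.inl rfl
    · exact Or.inr (Or.inl hyF)

lemma MXX.endpoint_y (h : MXX H C a x y) (hya : y ≠ a) :
    ∃ d, Reach H C a y (some d) := by
  have hHyx : H.Edge y x := hf.yx
  rcases h with rfl | ⟨hxC, hF | ⟨-, ⟨-, hyT⟩ | ⟨-, rfl | hyF | hyT⟩⟩⟩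
  · exact ⟨false, Reach.into Reach.start (by simp) (by simp) hHyx⟩
  · exact ⟨false, Reach.into hF (by simp) (fun _ => hxC) hHyx⟩
  · exact ⟨true, hyT⟩
  · exact absurd rfl hya
  · exact ⟨false, hyF⟩
  · exact ⟨true, hyT⟩

lemma MX3.endpoint_x (h : MX3 H C a x y) (hxa : x ≠ a) :
    ∃ d, Reach H C a x (some d) := by
  rcases h with rfl | hF | ⟨hT, -⟩
  · exact absurd rfl hxa
  · exact ⟨false, hF⟩
  · exact ⟨true, hT⟩

/-- Build the traversal memory from an aligned state at `x`. -/
lemma build_MXX {f : Option Bool} (hR : Reach H C a x f) (hcond : f ≠ none → x ∉ C)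
    (hext : f = some true → Reach H C a y (some true)) :
    MXX H C a x y ∧ (y ∈ C → MX3 H C a x y) := by
  rcases f with _ | fb
  · exact ⟨Or.inl (reach_none hR), fun _ => Or.inl (reach_none hR)⟩
  · rcases fb with _ | _
    · exact ⟨Or.inr ⟨hcond (by simp), Or.inl hR⟩, fun _ => Or.inr (Or.inl hR)⟩
    · have hyT := hext rfl
      refine ⟨Or.inr ⟨hcond (by simp), Or.inr ⟨hR, ?_⟩⟩, fun hyC =>
        Or.inr (Or.inr ⟨hR, Or.inl ⟨hyC, hyT⟩⟩)⟩
      by_cases hyC : y ∈ C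
      · exact Or.inl ⟨hyC, hyT⟩
      · exact Or.inr ⟨hyC, Or.inr (Or.inr hyT)⟩

end TransferLemmas

/-- The main simulation lemma: any active-walk state of `G` can be simulated in the
flipped graph `H`, up to the memory invariants at `x` and `y`. -/
lemma flip_theta (hcov : Covered G x y) (hf : IsFlip G H x y) (ha : a ∉ C) :
    ∀ {v : V} {fl : Option Bool}, Reach G C a v fl →
      Theta H C a x y v fl ∧
      (v = x → fl = some true → Reach H C a y (some true)) ∧
      (v = y → fl = some true → y ∈ C → MX3 H C a x y) := by
  intro v fl h
  induction h with
  | start =>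
    refine ⟨Or.inl Reach.start, ?_, ?_⟩
    · intro _ h'; simp at h'
    · intro _ h'; simp at h'
  | out h hcond he ih =>
    rename_i v w fl
    obtain ⟨hTh, hex1, hex2⟩ := ih
    rcases hTh with hR | ⟨hvy, hft, hMXX⟩ | ⟨hvx, hff, hMX3⟩
    · by_cases htrav : v = x ∧ w = y
      · obtain ⟨hvx, hwy⟩ := htrav
        rw [hvx] at hR hcond
        obtain ⟨hMXX, hMX3b⟩ := build_MXX hcov hf hR hcond (hex1 hvx)
        rw [hwy]
        refine ⟨Or.inr (Or.inl ⟨rfl, rfl, hMXX⟩), ?_, ?_⟩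
        · intro h1 _
          exact absurd h1 (Ne.symm (flip_x_ne_y hcov hf))
        · intro _ _ hyC
          exact hMX3b hyC
      · have hH : H.Edge v w := hf.of_G he htrav
        refine ⟨Or.inl (Reach.out hR hcond hH), ?_, ?_⟩
        · intro hwx _
          rw [hwx] at he
          have hvx : v ≠ x := G.edge_ne he
          have hGvy : G.Edge v y := ((hcov.2 v).mp he).1
          have hHvy : H.Edge v y := hf.of_G hGvy (by rintro ⟨rfl, -⟩; exact hvx rfl)
          exact Reach.out hR hcond hHvy
        · intro hwy _ hyC
          rw [hwy] at he
          have hvx : v ≠ x := fun h' => htrav ⟨h', hwy⟩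
          have hGvx : G.Edge v x := (hcov.2 v).mpr ⟨he, hvx⟩
          have hHvx : H.Edge v x := hf.of_G hGvx
            (by rintro ⟨-, h'⟩; exact flip_x_ne_y hcov hf h')
          have hHvy : H.Edge v y := hf.of_G he (by rintro ⟨rfl, -⟩; exact hvx rfl)
          exact Or.inr (Or.inr ⟨Reach.out hR hcond hHvx,
            Or.inl ⟨hyC, Reach.out hR hcond hHvy⟩⟩)
    · -- Θ2 : at (y, some true)
      subst hft
      have hyC : y ∉ C := hvy ▸ hcond (by simp)
      rw [hvy] at he
      refine ⟨Or.inl (hMXX.out_y hcov hf hyC he), ?_, ?_⟩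
      · intro hwx _
        rw [hwx] at he
        exact absurd he (flip_no_yx hcov hf)
      · intro hwy _ _
        rw [hwy] at he
        exact absurd he (G.not_edge_self y)
    · -- Θ3 : at (x, some false)
      subst hff
      have hxC : x ∉ C := hvx ▸ hcond (by simp)
      rw [hvx] at he
      by_cases hwy : w = y
      · rw [hwy]
        refine ⟨Or.inr (Or.inl ⟨rfl, rfl, hMX3.toMXX hcov hf hxC⟩), ?_, fun _ _ _ => hMX3⟩
        intro h1 _
        exact absurd h1 (Ne.symm (flip_x_ne_y hcov hf))
      · refine ⟨Or.inl (hMX3.out_x hcov hf hxC he hwy), ?_, ?_⟩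
        · intro hwx _
          rw [hwx] at he
          exact absurd he (G.not_edge_self x)
        · intro hwy' _ _
          exact absurd hwy' hwy
  | into h hc1 hc2 he ih =>
    rename_i v w fl
    obtain ⟨hTh, hex1, hex2⟩ := ih
    refine ⟨?_, fun _ h' => by simp at h', fun _ h' => by simp at h'⟩
    rcases hTh with hR | ⟨hvy, hft, hMXX⟩ | ⟨hvx, hff, hMX3⟩
    · by_cases htrav : w = x ∧ v = y
      · obtain ⟨hwx, hvy⟩ := htrav
        rw [hvy] at hR hc1 hc2
        have hHyx : H.Edge y x := hf.yx
        have hMX3' : MX3 H C a x y := by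
          rcases fl with _ | fb
          · have hya : y = a := reach_none hR
            have hynC : y ∉ C := by rw [hya]; exact ha
            have hxT : Reach H C a x (some true) :=
              Reach.out hR (fun h' => absurd rfl h') hHyx
            exact Or.inr (Or.inr ⟨hxT, Or.inr ⟨hynC, Or.inl hya⟩⟩)
          · rcases fb with _ | _
            · have hynC : y ∉ C := hc2 rfl
              have hxT : Reach H C a x (some true) := Reach.out hR (fun _ => hynC) hHyx
              exact Or.inr (Or.inr ⟨hxT, Or.inr ⟨hynC, Or.inr hR⟩⟩)
            · exact hex2 hvy rfl (hc1 rfl)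
        rw [hwx]
        exact Or.inr (Or.inr ⟨rfl, rfl, hMX3'⟩)
      · exact Or.inl (Reach.into hR hc1 hc2 (hf.of_G he htrav))
    · -- Θ2 : at (y, some true)
      subst hft
      have hyC : y ∈ C := hvy ▸ hc1 rfl
      rw [hvy] at he
      by_cases hwx : w = x
      · rw [hwx]
        exact Or.inr (Or.inr ⟨rfl, rfl, hMXX.toMX3 hcov hf hyC⟩)
      · exact Or.inl (hMXX.into_y hcov hf hyC he hwx)
    · -- Θ3 : at (x, some false)
      subst hff
      have hxC : x ∉ C := hvx ▸ hc2 rfl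
      rw [hvx] at he
      exact Or.inl (hMX3.into_x hcov hf hxC he)

/-- Transfer of strong active walks across a covered edge flip. -/
lemma flip_transfer (hcov : Covered G x y) (hf : IsFlip G H x y) {b : V} {d : Bool}
    (ha : a ∉ C) (hab : a ≠ b) (h : Reach G C a b (some d)) :
    ∃ d', Reach H C a b (some d') := by
  obtain ⟨hTh, -, -⟩ := flip_theta hcov hf ha h
  rcases hTh with hR | ⟨hby, -, hMXX⟩ | ⟨hbx, -, hMX3⟩
  · exact ⟨d, hR⟩
  · rw [hby] at hab ⊢
    exact hMXX.endpoint_y hcov hf (Ne.symm hab)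
  · rw [hbx] at hab ⊢
    exact hMX3.endpoint_x hcov hf (Ne.symm hab)


/-- Transfer of connectivity across a covered flip. -/
lemma not_dSep_transfer (hcov : Covered G x y) (hf : IsFlip G H x y) {A B C : Set V}
    (hAB : Disjoint A B) (hAC : Disjoint A C) (h : ¬ G.dSep A B C) : ¬ H.dSep A B C := by
  have h' : ∃ a ∈ A, ∃ b ∈ B, ∃ π : Path G a b, ¬ π.Blocked C := by
    by_contra hc
    push_neg at hc
    exact h (fun a ha b hb π => hc a ha b hb π)
  obtain ⟨a, ha, b, hb, π, hπ⟩ := h'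
  have hab : a ≠ b := fun h' => (Set.disjoint_left.mp hAB ha) (h' ▸ hb)
  have haC : a ∉ C := Set.disjoint_left.mp hAC ha
  obtain ⟨W⟩ := π.toNWalk hπ
  obtain ⟨d, hR⟩ := W.toReach
  obtain ⟨d', hR'⟩ := flip_transfer hcov hf haC hab hR
  obtain ⟨W'⟩ := hR'.toNWalk
  obtain ⟨π', hπ'⟩ := W'.toPath hab
  intro hd
  exact hπ' (hd a ha b hb π')

/-- Covered edge flips preserve all d-separations. -/
lemma covered_markovEquiv (hcov : Covered G x y) (hf : IsFlip G H x y) :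
    MarkovEquiv G H := by
  intro A B C hAB hAC hBC
  constructor
  · intro hd
    by_contra hnd
    exact not_dSep_transfer (hf.covered_flip hcov) (hf.symm hcov) hAB hAC hnd hd
  · intro hd
    by_contra hnd
    exact not_dSep_transfer hcov hf hAB hAC hnd hd

/-- Covered flips preserve the skeleton. -/
lemma IsFlip.adj_iff (hf : IsFlip G H x y) (hcov : Covered G x y) (u v : V) :
    H.Adj u v ↔ G.Adj u v := by
  constructor
  · rintro (h | h)
    · rcases (hf u v).mp h with ⟨h', -⟩ | ⟨rfl, rfl⟩
      · exact Or.inl h'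
      · exact Or.inr hcov.1
    · rcases (hf v u).mp h with ⟨h', -⟩ | ⟨rfl, rfl⟩
      · exact Or.inr h'
      · exact Or.inl hcov.1
  · rintro (h | h)
    · by_cases huv : u = x ∧ v = y
      · obtain ⟨rfl, rfl⟩ := huv
        exact Or.inr hf.yx
      · exact Or.inl (hf.of_G h huv)
    · by_cases huv : v = x ∧ u = y
      · obtain ⟨rfl, rfl⟩ := huv
        exact Or.inl hf.yx
      · exact Or.inr (hf.of_G h huv)

lemma IsFlip.collider_of (hf : IsFlip G H x y) (hcov : Covered G x y) {i k j : V}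
    (h : G.IsCollider i k j) : H.IsCollider i k j := by
  obtain ⟨⟨hij, hik, hjk, hAik, hAjk, hnadj⟩, he1, he2⟩ := h
  refine ⟨⟨hij, hik, hjk, (hf.adj_iff hcov i k).mpr hAik, (hf.adj_iff hcov j k).mpr hAjk,
    fun h' => hnadj ((hf.adj_iff hcov i j).mp h')⟩, ?_, ?_⟩
  · refine hf.of_G he1 ?_
    rintro ⟨rfl, rfl⟩
    exact hnadj (Or.inr ((hcov.2 j).mpr ⟨he2, Ne.symm hij⟩))
  · refine hf.of_G he2 ?_
    rintro ⟨rfl, rfl⟩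
    exact hnadj (Or.inl ((hcov.2 i).mpr ⟨he1, hij⟩))

lemma IsFlip.collider_iff (hf : IsFlip G H x y) (hcov : Covered G x y) (i k j : V) :
    H.IsCollider i k j ↔ G.IsCollider i k j :=
  ⟨fun h => (hf.symm hcov).collider_of (hf.covered_flip hcov) h, hf.collider_of hcov⟩

section Fin

variable [Fintype V]

/-- The number of (strict) ancestors of a node. -/
noncomputable def rankv (G : DAG V) (v : V) : ℕ :=
  (@Finset.filter _ (fun u => TransGen G.Edge u v) (Classical.decPred _) Finset.univ).card

lemma rankv_lt {G : DAG V} {v w : V} (h : G.Edge v w) : rankv G v < rankv G w := by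
  apply Finset.card_lt_card
  rw [Finset.ssubset_iff_of_subset]
  · refine ⟨v, ?_, ?_⟩
    · simp only [Finset.mem_filter, Finset.mem_univ, true_and]
      exact TransGen.single h
    · simp only [Finset.mem_filter, Finset.mem_univ, true_and]
      exact G.acyclic v
  · intro u hu
    simp only [Finset.mem_filter, Finset.mem_univ, true_and] at hu ⊢
    exact hu.tail h

/-- The set of edges of `G₁` whose reversal appears in `G₂`. -/
noncomputable def dset (G₁ G₂ : DAG V) : Finset (V × V) :=
  @Finset.filter _ (fun p => G₁.Edge p.1 p.2 ∧ ¬ G₂.Edge p.1 p.2) (Classical.decPred _)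
    Finset.univ

lemma mem_dset {G₁ G₂ : DAG V} {p : V × V} :
    p ∈ dset G₁ G₂ ↔ (G₁.Edge p.1 p.2 ∧ ¬ G₂.Edge p.1 p.2) := by
  simp [dset]

/-- Chickering's lemma: among the disagreeing edges there is one which is covered. -/
lemma exists_covered_flipped (G₁ G₂ : DAG V)
    (hskel : ∀ i j, G₁.Adj i j ↔ G₂.Adj i j)
    (hcol : ∀ i k j, G₁.IsCollider i k j ↔ G₂.IsCollider i k j)
    (hne : ∃ u v, G₁.Edge u v ∧ ¬ G₂.Edge u v) :
    ∃ x y, G₁.Edge x y ∧ ¬ G₂.Edge x y ∧ Covered G₁ x y := by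
  classical
  have hDne : (dset G₁ G₂).Nonempty := by
    obtain ⟨u, v, h1, h2⟩ := hne
    exact ⟨(u, v), mem_dset.mpr ⟨h1, h2⟩⟩
  obtain ⟨p₀, hp₀, hp₀min⟩ := Finset.exists_min_image (dset G₁ G₂)
    (fun p => rankv G₁ p.2) hDne
  obtain ⟨q, hq, hqmax⟩ := Finset.exists_max_image
    ((dset G₁ G₂).filter (fun p => rankv G₁ p.2 = rankv G₁ p₀.2))
    (fun p => rankv G₁ p.1) ⟨p₀, by simp [hp₀]⟩
  rw [Finset.mem_filter, mem_dset] at hq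
  obtain ⟨⟨hE1, hE2⟩, hqrank⟩ := hq
  obtain ⟨x, y⟩ := q
  simp only at hE1 hE2 hqrank hqmax
  refine ⟨x, y, hE1, hE2, hE1, ?_⟩
  have hxyne : x ≠ y := G₁.edge_ne hE1
  have hE2' : G₂.Edge y x := ((hskel x y).mp (Or.inl hE1)).resolve_left hE2
  have hP1 : ∀ u v, G₁.Edge u v → ¬ G₂.Edge u v → rankv G₁ y ≤ rankv G₁ v := by
    intro u v h1 h2
    rw [hqrank]
    exact hp₀min (u, v) (mem_dset.mpr ⟨h1, h2⟩)
  have hP2 : ∀ u v, G₁.Edge u v → ¬ G₂.Edge u v → rankv G₁ v ≤ rankv G₁ y →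
      rankv G₁ u ≤ rankv G₁ x := by
    intro u v h1 h2 h3
    have h4 : rankv G₁ v = rankv G₁ p₀.2 := by
      have h5 := hP1 u v h1 h2
      omega
    exact hqmax (u, v) (by rw [Finset.mem_filter, mem_dset]; exact ⟨⟨h1, h2⟩, h4⟩)
  intro w
  constructor
  · intro hw
    have hwx : w ≠ x := G₁.edge_ne hw
    have hwy : w ≠ y := by
      rintro rfl
      exact G₁.not_edge_both hE1 hw
    have hAdj1wy : G₁.Adj w y := by
      by_contra hnadj
      by_cases hw2 : G₂.Edge w x
      · have hcol2 : G₂.IsCollider w x y := by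
          refine ⟨⟨hwy, hwx, Ne.symm hxyne, (hskel w x).mp (Or.inl hw),
            (hskel y x).mp (Or.inr hE1), fun h => hnadj ((hskel w y).mpr h)⟩, hw2, hE2'⟩
        have := ((hcol w x y).mpr hcol2).2.2
        exact G₁.not_edge_both hE1 this
      · have := hP1 w x hw hw2
        have := rankv_lt hE1
        omega
    refine ⟨?_, hwx⟩
    rcases hAdj1wy with h | h
    · exact h
    · exfalso
      exact G₁.acyclic w (((TransGen.single hw).tail hE1).tail h)
  · rintro ⟨hwy, hwx⟩
    have hwyne : w ≠ y := G₁.edge_ne hwy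
    have hAdj1wx : G₁.Adj w x := by
      by_contra hnadj
      have hcol1 : G₁.IsCollider x y w := by
        refine ⟨⟨fun h => hwx h.symm, hxyne, hwyne, Or.inl hE1, Or.inl hwy,
          fun h => hnadj h.symm⟩, hE1, hwy⟩
      exact hE2 ((hcol x y w).mp hcol1).2.1
    rcases hAdj1wx with h | h
    · exact h
    · exfalso
      -- h : G₁.Edge x w
      by_cases hw2 : G₂.Edge x w
      · have hnwy2 : ¬ G₂.Edge w y := by
          intro h'
          exact G₂.acyclic y (((TransGen.single hE2').tail hw2).tail h')
        have := hP2 w y hwy hnwy2 le_rfl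
        have := rankv_lt h
        omega
      · have := hP1 x w h hw2
        have := rankv_lt hwy
        omega

/-- DAGs with the same edge relation are equal. -/
lemma ext_edge {G₁ G₂ : DAG V} (h : ∀ u v, G₁.Edge u v ↔ G₂.Edge u v) : G₁ = G₂ := by
  obtain ⟨E₁, a₁⟩ := G₁
  obtain ⟨E₂, a₂⟩ := G₂
  have : E₁ = E₂ := funext fun u => funext fun v => propext (h u v)
  subst this
  rfl

lemma dset_flip_lt {G₁ G₂ H : DAG V} {x y : V} (hf : IsFlip G₁ H x y)
    (hcov : Covered G₁ x y) (h1 : ¬ G₂.Edge x y) (h2 : G₂.Edge y x) :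
    (dset H G₂).card < (dset G₁ G₂).card := by
  apply Finset.card_lt_card
  rw [Finset.ssubset_iff_of_subset]
  · refine ⟨(x, y), mem_dset.mpr ⟨hcov.1, h1⟩, ?_⟩
    rw [mem_dset]
    rintro ⟨hH, -⟩
    exact hf.not_xy hcov hH
  · intro p hp
    rw [mem_dset] at hp ⊢
    obtain ⟨hH, hG2⟩ := hp
    rcases (hf p.1 p.2).mp hH with ⟨hE, -⟩ | ⟨h1', h2'⟩
    · exact ⟨hE, hG2⟩
    · exfalso
      apply hG2
      rw [h1', h2']
      exact h2

/-- The hard direction: same skeleton and colliders imply Markov equivalence. -/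
lemma markovEquiv_of_same (G₁ G₂ : DAG V)
    (hskel : ∀ i j, G₁.Adj i j ↔ G₂.Adj i j)
    (hcol : ∀ i k j, G₁.IsCollider i k j ↔ G₂.IsCollider i k j) :
    MarkovEquiv G₁ G₂ := by
  classical
  obtain ⟨N, hN⟩ : ∃ N, (dset G₁ G₂).card = N := ⟨_, rfl⟩
  induction N using Nat.strong_induction_on generalizing G₁ with
  | _ N ih =>
  by_cases heq : ∀ u v, G₁.Edge u v ↔ G₂.Edge u v
  · rw [ext_edge heq]
    exact fun A B C _ _ _ => Iff.rfl
  · have hne : ∃ u v, G₁.Edge u v ∧ ¬ G₂.Edge u v := by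
      push_neg at heq
      obtain ⟨u, v, huv⟩ := heq
      rcases huv with ⟨h1, h2⟩ | ⟨h1, h2⟩
      · exact ⟨u, v, h1, h2⟩
      · have h3 : G₁.Edge v u := ((hskel u v).mpr (Or.inl h2)).resolve_left h1
        have h4 : ¬ G₂.Edge v u := fun h => G₂.acyclic u ((TransGen.single h2).tail h)
        exact ⟨v, u, h3, h4⟩
    obtain ⟨x, y, hE1, hE2, hcov⟩ := exists_covered_flipped G₁ G₂ hskel hcol hne
    set H := flip G₁ x y hcov with hH
    have hf : IsFlip G₁ H x y := flip_isFlip G₁ x y hcov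
    have hE2' : G₂.Edge y x := ((hskel x y).mp (Or.inl hE1)).resolve_left hE2
    have hmeq : MarkovEquiv G₁ H := covered_markovEquiv hcov hf
    have hskel' : ∀ i j, H.Adj i j ↔ G₂.Adj i j :=
      fun i j => (hf.adj_iff hcov i j).trans (hskel i j)
    have hcol' : ∀ i k j, H.IsCollider i k j ↔ G₂.IsCollider i k j :=
      fun i k j => (hf.collider_iff hcov i k j).trans (hcol i k j)
    have hlt : (dset H G₂).card < N := hN ▸ dset_flip_lt hf hcov hE2 hE2'
    exact hmeq.trans (ih _ hlt H hskel' hcol' rfl)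

end Fin
end Transfer

end DAG

end Aux
/-- Two DAGs are Markov equivalent iff they have the same skeleton and the same
collider v-configurations. -/
theorem stmt_10 {V : Type*} [Fintype V] (G₁ G₂ : DAG V) :
    DAG.MarkovEquiv G₁ G₂ ↔
      ((∀ i j : V, G₁.Adj i j ↔ G₂.Adj i j) ∧
        (∀ i k j : V, G₁.IsCollider i k j ↔ G₂.IsCollider i k j)) := by
  constructor
  · intro h
    refine ⟨fun i j => ⟨fun hadj => h.adj hadj, fun hadj => h.symm.adj hadj⟩,
      fun i k j => ⟨fun hc => h.collider hc, fun hc => h.symm.collider hc⟩⟩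
  · rintro ⟨hskel, hcol⟩
    exact DAG.markovEquiv_of_same G₁ G₂ hskel hcol
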